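/- The vector operators Y₊ and Y₋ are componentwise covariant differential operators of order 1: for every smooth function f on ℍ_{1,N}, every g ∈ G̃^J_N, every k ∈ ℤ, every complex symmetric N×N matrix L, and every j ∈ {1,…,N}, Y₊,ⱼ(f|_{k,L}[g]) = (Y₊,ⱼ f)|_{k+1,L}[g] and Y₋,ⱼ(f|_{k,L}[g]) = (Y₋,ⱼ f)|_{k-1,L}[g]. -/

import Mathlib

open Matrix Complex

noncomputable section

def J2 : Matrix (Fin 2) (Fin 2) ℝ := !![0, -1; 1, 0]

/-- An element of the (centrally extended) Jacobi group data: a triple (M, X, κ). -/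
structure JTriple (N : ℕ) where
  M : Matrix (Fin 2) (Fin 2) ℝ
  X : Matrix (Fin N) (Fin 2) ℝ
  κ : Matrix (Fin N) (Fin N) ℝ

/-- Membership in the centrally extended real Jacobi group `G̃^J_N`. -/
def JTriple.IsMem {N : ℕ} (g : JTriple N) : Prop :=
  g.M.det = 1 ∧ (g.κ + (2⁻¹ : ℝ) • (g.X * J2 * g.X.transpose)).IsSymm

/-- The group law of `G̃^J_N`. -/
def JTriple.mul {N : ℕ} (g g' : JTriple N) : JTriple N :=
  ⟨g.M * g'.M, g.X * g'.M + g'.X, g.κ + g'.κ - g.X * g'.M * J2 * g'.X.transpose⟩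

/-- The Möbius action `Mτ := (aτ+b)/(cτ+d)`. -/
def mAct (M : Matrix (Fin 2) (Fin 2) ℝ) (τ : ℂ) : ℂ :=
  ((M 0 0 : ℝ) * τ + (M 0 1 : ℝ)) / ((M 1 0 : ℝ) * τ + (M 1 1 : ℝ))

/-- The cocycle `β(M,τ) := (cτ+d)⁻¹`. -/
def betaC (M : Matrix (Fin 2) (Fin 2) ℝ) (τ : ℂ) : ℂ :=
  (((M 1 0 : ℝ) : ℂ) * τ + ((M 1 1 : ℝ) : ℂ))⁻¹

/-- First column of `X`, as a complex vector. -/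
def col1 {N : ℕ} (X : Matrix (Fin N) (Fin 2) ℝ) : Fin N → ℂ := fun i => (X i 0 : ℂ)

/-- Second column of `X`, as a complex vector. -/
def col2 {N : ℕ} (X : Matrix (Fin N) (Fin 2) ℝ) : Fin N → ℂ := fun i => (X i 1 : ℂ)

/-- The action of `G̃^J_N` on `ℍ_{1,N} ⊆ ℂ × ℂ^N`:
`(M,X,κ)·(τ,z) := (Mτ, β(M,τ)(z + X₁τ + X₂))`. -/
def jAct {N : ℕ} (g : JTriple N) (p : ℂ × (Fin N → ℂ)) : ℂ × (Fin N → ℂ) :=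
  (mAct g.M p.1, betaC g.M p.1 • (p.2 + p.1 • col1 g.X + col2 g.X))

/-- The matrix-valued function `a(g, (τ,z))`. -/
def aFun {N : ℕ} (g : JTriple N) (p : ℂ × (Fin N → ℂ)) : Matrix (Fin N) (Fin N) ℂ :=
  g.κ.map (fun t => (t : ℂ))
    + vecMulVec (col2 g.X) (col1 g.X) + vecMulVec (col1 g.X) p.2 + vecMulVec p.2 (col1 g.X)
    + p.1 • vecMulVec (col1 g.X) (col1 g.X)
    - (((g.M 1 0 : ℝ) : ℂ) * betaC g.M p.1) •
        vecMulVec (p.2 + p.1 • col1 g.X + col2 g.X) (p.2 + p.1 • col1 g.X + col2 g.X)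

/-- The scalar cocycle `α_L(g,(τ,z)) := e^{2πi·tr(L·a(g,(τ,z)))}`. -/
def alphaL {N : ℕ} (L : Matrix (Fin N) (Fin N) ℂ) (g : JTriple N)
    (p : ℂ × (Fin N → ℂ)) : ℂ :=
  Complex.exp (2 * Real.pi * Complex.I * (L * aFun g p).trace)

/-- The slash action `(f|_{k,L}[g])(τ,z) := β(M,τ)^k·α_L(g,(τ,z))·f(g·(τ,z))`. -/
def jSlash {N : ℕ} (k : ℤ) (L : Matrix (Fin N) (Fin N) ℂ)
    (f : ℂ × (Fin N → ℂ) → ℂ) (g : JTriple N) : ℂ × (Fin N → ℂ) → ℂ :=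
  fun p => betaC g.M p.1 ^ k * alphaL L g p * f (jAct g p)

/-- The Wirtinger derivative `∂_τ = ½(∂_x − i∂_y)` for functions on `ℂ × ℂ^N`. -/
def dTau {N : ℕ} (f : ℂ × (Fin N → ℂ) → ℂ) (p : ℂ × (Fin N → ℂ)) : ℂ :=
  (2⁻¹ : ℂ) * (fderiv ℝ f p (1, 0) - Complex.I * fderiv ℝ f p (Complex.I, 0))

/-- The Wirtinger derivative `∂_τ̄ = ½(∂_x + i∂_y)`. -/
def dTauBar {N : ℕ} (f : ℂ × (Fin N → ℂ) → ℂ) (p : ℂ × (Fin N → ℂ)) : ℂ :=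
  (2⁻¹ : ℂ) * (fderiv ℝ f p (1, 0) + Complex.I * fderiv ℝ f p (Complex.I, 0))

/-- The Wirtinger derivative `∂_{z_j} = ½(∂_{u_j} − i∂_{v_j})`. -/
def dZ {N : ℕ} (j : Fin N) (f : ℂ × (Fin N → ℂ) → ℂ) (p : ℂ × (Fin N → ℂ)) : ℂ :=
  (2⁻¹ : ℂ) * (fderiv ℝ f p (0, Pi.single j 1) -
    Complex.I * fderiv ℝ f p (0, Pi.single j Complex.I))

/-- The Wirtinger derivative `∂_{z̄_j} = ½(∂_{u_j} + i∂_{v_j})`. -/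
def dZBar {N : ℕ} (j : Fin N) (f : ℂ × (Fin N → ℂ) → ℂ) (p : ℂ × (Fin N → ℂ)) : ℂ :=
  (2⁻¹ : ℂ) * (fderiv ℝ f p (0, Pi.single j 1) +
    Complex.I * fderiv ℝ f p (0, Pi.single j Complex.I))

/-- `y = Im τ` as a complex number. -/
def yC {N : ℕ} (p : ℂ × (Fin N → ℂ)) : ℂ := (p.1.im : ℝ)

/-- `v_j = Im z_j` as a complex number. -/
def vC {N : ℕ} (p : ℂ × (Fin N → ℂ)) (j : Fin N) : ℂ := ((p.2 j).im : ℝ)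

/-- `𝔏 := 2πi·L`. -/
def Lfrak {N : ℕ} (L : Matrix (Fin N) (Fin N) ℂ) : Matrix (Fin N) (Fin N) ℂ :=
  (2 * (Real.pi : ℂ) * Complex.I) • L

/-- The lowering operator `X₋ := −2iy(y∂_τ̄ + vᵀ∂_z̄)`. -/
def opXm {N : ℕ} (f : ℂ × (Fin N → ℂ) → ℂ) (p : ℂ × (Fin N → ℂ)) : ℂ :=
  -2 * Complex.I * yC p * (yC p * dTauBar f p + ∑ j, vC p j * dZBar j f p)

/-- The raising operator `X₊^{k} := 2i(∂_τ + y⁻¹vᵀ∂_z + y⁻²𝔏[v]) + k·y⁻¹`. -/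
def opXp {N : ℕ} (L : Matrix (Fin N) (Fin N) ℂ) (k : ℤ)
    (f : ℂ × (Fin N → ℂ) → ℂ) (p : ℂ × (Fin N → ℂ)) : ℂ :=
  2 * Complex.I * (dTau f p + (yC p)⁻¹ * ∑ j, vC p j * dZ j f p
      + ((yC p)⁻¹) ^ 2 * (∑ i, ∑ j, vC p i * Lfrak L i j * vC p j) * f p)
    + (k : ℂ) * (yC p)⁻¹ * f p

/-- The lowering operator `Y₋,ⱼ := −iy∂_{z̄ⱼ}`. -/
def opYm {N : ℕ} (j : Fin N) (f : ℂ × (Fin N → ℂ) → ℂ) (p : ℂ × (Fin N → ℂ)) : ℂ :=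
  -Complex.I * yC p * dZBar j f p

/-- The raising operator `Y₊,ⱼ := i∂_{zⱼ} + 2iy⁻¹(𝔏v)ⱼ`. -/
def opYp {N : ℕ} (L : Matrix (Fin N) (Fin N) ℂ) (j : Fin N)
    (f : ℂ × (Fin N → ℂ) → ℂ) (p : ℂ × (Fin N → ℂ)) : ℂ :=
  Complex.I * dZ j f p + 2 * Complex.I * (yC p)⁻¹ * (∑ l, Lfrak L j l * vC p l) * f p
namespace OpYAux
open Matrix Complex
variable {N : ℕ}


def dnmC (M : Matrix (Fin 2) (Fin 2) ℝ) (τ : ℂ) : ℂ := ((M 1 0 : ℝ) : ℂ) * τ + ((M 1 1 : ℝ) : ℂ)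

lemma imC (w : ℂ) : ((w.im : ℝ) : ℂ) = (w - (starRingEnd ℂ) w) / (2 * Complex.I) := by
  rw [Complex.sub_conj]
  have hI : (2 : ℂ) * Complex.I ≠ 0 := by simp [Complex.I_ne_zero]
  field_simp
  push_cast
  ring

lemma dnmC_ne_zero {M : Matrix (Fin 2) (Fin 2) ℝ} (hdet : M.det = 1) {τ : ℂ}
    (hτ : 0 < τ.im) : dnmC M τ ≠ 0 := by
  rcases eq_or_ne (M 1 0) 0 with h | h
  · have hd : M 1 1 ≠ 0 := by
      intro h1
      rw [Matrix.det_fin_two, h, h1] at hdet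
      simp at hdet
    simp only [dnmC, h]
    simpa using hd
  · intro h0
    have him : (dnmC M τ).im = M 1 0 * τ.im := by
      simp [dnmC]
    rw [h0] at him
    simp only [Complex.zero_im] at him
    exact (mul_ne_zero h (ne_of_gt hτ)) him.symm

/-- `W = z + τ X₁ + X₂` -/
def Wv (g : JTriple N) (p : ℂ × (Fin N → ℂ)) : Fin N → ℂ := p.2 + p.1 • col1 g.X + col2 g.X

/-- `c β` -/
def cB (g : JTriple N) (p : ℂ × (Fin N → ℂ)) : ℂ := ((g.M 1 0 : ℝ) : ℂ) * betaC g.M p.1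

def trL (L : Matrix (Fin N) (Fin N) ℂ) (a b : Fin N → ℂ) : ℂ := ∑ i, ∑ l, L i l * a l * b i

lemma trace_L_vecMulVec (L : Matrix (Fin N) (Fin N) ℂ) (a b : Fin N → ℂ) :
    (L * vecMulVec a b).trace = trL L a b := by
  simp only [Matrix.trace, Matrix.diag, Matrix.mul_apply, vecMulVec_apply, trL]
  exact Finset.sum_congr rfl fun i _ => Finset.sum_congr rfl fun l _ => by ring

lemma aFun_line (g : JTriple N) (p : ℂ × (Fin N → ℂ)) (w : Fin N → ℂ) (s : ℝ) :
    aFun g (p.1, p.2 + s • w) = aFun g p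
      + s • (vecMulVec (col1 g.X) w + vecMulVec w (col1 g.X)
          - cB g p • (vecMulVec (Wv g p) w + vecMulVec w (Wv g p)))
      + (s * s) • (-(cB g p • vecMulVec w w)) := by
  ext i i'
  simp only [aFun, cB, Wv, Matrix.add_apply, Matrix.sub_apply, Matrix.smul_apply,
    Matrix.neg_apply, vecMulVec_apply, Pi.add_apply, Pi.smul_apply, smul_eq_mul,
    Complex.real_smul]
  push_cast
  ring

lemma trace_line (L : Matrix (Fin N) (Fin N) ℂ) (g : JTriple N) (p : ℂ × (Fin N → ℂ))
    (w : Fin N → ℂ) (s : ℝ) :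
    (L * aFun g (p.1, p.2 + s • w)).trace = (L * aFun g p).trace
      + (s : ℂ) * (trL L (col1 g.X) w + trL L w (col1 g.X)
          - cB g p * (trL L (Wv g p) w + trL L w (Wv g p)))
      + ((s : ℂ) * s) * (-(cB g p * trL L w w)) := by
  rw [aFun_line]
  simp only [Matrix.mul_add, Matrix.mul_sub, Matrix.mul_smul, Matrix.mul_neg,
    Matrix.trace_add, Matrix.trace_sub, Matrix.trace_smul, Matrix.trace_neg,
    trace_L_vecMulVec, smul_eq_mul, Complex.real_smul]
  push_cast
  ring

lemma jAct_line (g : JTriple N) (p : ℂ × (Fin N → ℂ)) (j : Fin N) (t : ℂ) (s : ℝ) :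
    jAct g (p.1, p.2 + s • (Pi.single j t : Fin N → ℂ))
      = ((jAct g p).1, (jAct g p).2 + s • (Pi.single j (betaC g.M p.1 * t) : Fin N → ℂ)) := by
  refine Prod.ext rfl ?_
  funext i
  simp only [jAct, Pi.add_apply, Pi.smul_apply, smul_eq_mul, Complex.real_smul,
    Pi.single_apply]
  rcases eq_or_ne i j with rfl | h
  · simp; ring
  · simp [h]


lemma alphaL_eq (L : Matrix (Fin N) (Fin N) ℂ) (g : JTriple N) (p : ℂ × (Fin N → ℂ)) :
    alphaL L g p = Complex.exp (2 * Real.pi * Complex.I * (L * aFun g p).trace) := rfl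

/-- Derivative of the slashed function along a coordinate line in the `z`-direction. -/
lemma hasDerivAt_jSlash_line (k : ℤ) (L : Matrix (Fin N) (Fin N) ℂ) (g : JTriple N)
    (f : ℂ × (Fin N → ℂ) → ℂ) (hf : ContDiff ℝ (⊤ : ℕ∞) f)
    (p : ℂ × (Fin N → ℂ)) (j : Fin N) (t : ℂ) :
    HasDerivAt (fun s : ℝ => jSlash k L f g (p.1, p.2 + s • (Pi.single j t : Fin N → ℂ)))
      (betaC g.M p.1 ^ k * alphaL L g p *
        ((2 * Real.pi * Complex.I) * (trL L (col1 g.X) (Pi.single j t)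
            + trL L (Pi.single j t) (col1 g.X)
            - cB g p * (trL L (Wv g p) (Pi.single j t) + trL L (Pi.single j t) (Wv g p)))
            * f (jAct g p)
          + fderiv ℝ f (jAct g p) (0, (Pi.single j (betaC g.M p.1 * t) : Fin N → ℂ)))) 0 := by
  classical
  set e : Fin N → ℂ := Pi.single j t with he
  set e' : Fin N → ℂ := Pi.single j (betaC g.M p.1 * t) with he'
  set Φ0 : ℂ := 2 * Real.pi * Complex.I * (L * aFun g p).trace with hΦ0
  set T1 : ℂ := 2 * Real.pi * Complex.I * (trL L (col1 g.X) e + trL L e (col1 g.X)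
      - cB g p * (trL L (Wv g p) e + trL L e (Wv g p))) with hT1
  set T2 : ℂ := 2 * Real.pi * Complex.I * (-(cB g p * trL L e e)) with hT2
  have hcurve : (fun s : ℝ => jSlash k L f g (p.1, p.2 + s • e))
      = fun s : ℝ => betaC g.M p.1 ^ k *
          (Complex.exp (Φ0 + s • T1 + (s * s) • T2)
            * f ((jAct g p).1, (jAct g p).2 + s • e')) := by
    funext s
    rw [jSlash, he, jAct_line, alphaL_eq]
    show betaC g.M p.1 ^ k * _ * _ = _
    rw [trace_line]
    rw [mul_assoc]
    congr 2
    simp only [Complex.real_smul, hΦ0, hT1, hT2]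
    push_cast
    rw [← he]
    congr 1
    ring
  rw [hcurve]
  -- derivative of the exponent
  have h2inner : HasDerivAt (fun s : ℝ => Φ0 + s • T1 + (s * s) • T2) T1 0 := by
    have ha : HasDerivAt (fun s : ℝ => s • T1) ((1 : ℝ) • T1) 0 :=
      (hasDerivAt_id 0).smul_const T1
    have hb : HasDerivAt (fun s : ℝ => (s * s) • T2) ((1 * 0 + 0 * 1 : ℝ) • T2) 0 :=
      ((hasDerivAt_id 0).mul (hasDerivAt_id 0)).smul_const T2
    have := ((hasDerivAt_const (0:ℝ) Φ0).add ha).add hb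
    simp only [one_smul, mul_zero, zero_mul, add_zero, zero_smul, zero_add] at this
    exact this
  have h2 : HasDerivAt (fun s : ℝ => Complex.exp (Φ0 + s • T1 + (s * s) • T2))
      (Complex.exp Φ0 * T1) 0 := by
    have := h2inner.cexp
    simpa using this
  -- derivative of the f-part
  have h3curve : HasDerivAt
      (fun s : ℝ => (((jAct g p).1, (jAct g p).2 + s • e') : ℂ × (Fin N → ℂ)))
      ((0 : ℂ), e') 0 := by
    have := ((hasDerivAt_const (0:ℝ) (jAct g p).2).add ((hasDerivAt_id 0).smul_const e'))
    simpa using (hasDerivAt_const (0:ℝ) (jAct g p).1).prodMk this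
  have h3 : HasDerivAt (fun s : ℝ => f ((jAct g p).1, (jAct g p).2 + s • e'))
      (fderiv ℝ f (jAct g p) (0, e')) 0 := by
    have hfd : HasFDerivAt f (fderiv ℝ f (jAct g p)) (jAct g p) :=
      ((hf.differentiable (by simp)) (jAct g p)).hasFDerivAt
    have := hfd.comp_hasDerivAt_of_eq 0 h3curve (by simp)
    exact this
  have h4 := (h2.mul h3).const_mul (betaC g.M p.1 ^ k)
  have hpt : (((jAct g p).1, (jAct g p).2 + (0:ℝ) • e') : ℂ × (Fin N → ℂ)) = jAct g p := by
    refine Prod.ext rfl ?_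
    simp
  simp only [zero_smul, add_zero, zero_mul, hpt, Prod.mk.eta] at h4
  have hexp : Complex.exp Φ0 = alphaL L g p := rfl
  refine h4.congr_deriv ?_
  rw [← hexp]
  ring


lemma trace_aFun_eq (L : Matrix (Fin N) (Fin N) ℂ) (g : JTriple N) (p : ℂ × (Fin N → ℂ)) :
    (L * aFun g p).trace = (L * g.κ.map (fun t => (t : ℂ))).trace
      + trL L (col2 g.X) (col1 g.X) + trL L (col1 g.X) p.2 + trL L p.2 (col1 g.X)
      + p.1 * trL L (col1 g.X) (col1 g.X) - cB g p * trL L (Wv g p) (Wv g p) := by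
  rw [aFun]
  simp only [Matrix.mul_add, Matrix.mul_sub, Matrix.mul_smul, Matrix.trace_add,
    Matrix.trace_sub, Matrix.trace_smul, trace_L_vecMulVec, smul_eq_mul, cB, Wv]

lemma diff_coord (i : Fin N) (p : ℂ × (Fin N → ℂ)) :
    DifferentiableAt ℝ (fun q : ℂ × (Fin N → ℂ) => q.2 i) p :=
  ((ContinuousLinearMap.proj i : (Fin N → ℂ) →L[ℝ] ℂ).differentiableAt).comp p
    differentiableAt_snd

lemma diff_betaC {g : JTriple N} {p : ℂ × (Fin N → ℂ)} (hd : dnmC g.M p.1 ≠ 0) :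
    DifferentiableAt ℝ (fun q : ℂ × (Fin N → ℂ) => betaC g.M q.1) p := by
  have h1 : DifferentiableAt ℂ (fun τ : ℂ => betaC g.M τ) p.1 := by
    have : DifferentiableAt ℂ (fun τ : ℂ => ((g.M 1 0 : ℝ) : ℂ) * τ + ((g.M 1 1 : ℝ) : ℂ)) p.1 :=
      (differentiableAt_id.const_mul _).add_const _
    exact this.inv hd
  exact (h1.restrictScalars ℝ).comp p differentiableAt_fst

lemma diff_Wv (g : JTriple N) (p : ℂ × (Fin N → ℂ)) (i : Fin N) :
    DifferentiableAt ℝ (fun q : ℂ × (Fin N → ℂ) => Wv g q i) p := by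
  show DifferentiableAt ℝ
    (fun q : ℂ × (Fin N → ℂ) => q.2 i + q.1 * col1 g.X i + col2 g.X i) p
  exact (((diff_coord i p).add ((differentiableAt_fst).mul_const _))).add_const _

lemma diff_trL {L : Matrix (Fin N) (Fin N) ℂ} {a b : (ℂ × (Fin N → ℂ)) → Fin N → ℂ}
    {p : ℂ × (Fin N → ℂ)}
    (ha : ∀ i, DifferentiableAt ℝ (fun q => a q i) p)
    (hb : ∀ i, DifferentiableAt ℝ (fun q => b q i) p) :
    DifferentiableAt ℝ (fun q => trL L (a q) (b q)) p := by
  unfold trL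
  apply DifferentiableAt.fun_sum
  intro i _
  apply DifferentiableAt.fun_sum
  intro l _
  exact (((ha l).const_mul _).mul (hb i))

lemma diff_alphaL {L : Matrix (Fin N) (Fin N) ℂ} {g : JTriple N} {p : ℂ × (Fin N → ℂ)}
    (hd : dnmC g.M p.1 ≠ 0) :
    DifferentiableAt ℝ (alphaL L g) p := by
  have htr : DifferentiableAt ℝ (fun q : ℂ × (Fin N → ℂ) => (L * aFun g q).trace) p := by
    have : (fun q : ℂ × (Fin N → ℂ) => (L * aFun g q).trace)
        = fun q => (L * g.κ.map (fun t => (t : ℂ))).trace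
          + trL L (col2 g.X) (col1 g.X) + trL L (col1 g.X) q.2 + trL L q.2 (col1 g.X)
          + q.1 * trL L (col1 g.X) (col1 g.X) - cB g q * trL L (Wv g q) (Wv g q) := by
      funext q; exact trace_aFun_eq L g q
    rw [this]
    have hcB : DifferentiableAt ℝ (fun q : ℂ × (Fin N → ℂ) => cB g q) p :=
      (diff_betaC hd).const_mul _
    refine DifferentiableAt.sub ?_ (hcB.mul (diff_trL (diff_Wv g p) (diff_Wv g p)))
    refine DifferentiableAt.add ?_ (differentiableAt_fst.mul_const _)
    refine DifferentiableAt.add ?_ (diff_trL (fun i => diff_coord i p)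
      (fun i => differentiableAt_const _))
    refine DifferentiableAt.add ?_ (diff_trL (fun i => differentiableAt_const _)
      (fun i => diff_coord i p))
    exact differentiableAt_const _
  have : DifferentiableAt ℝ
      (fun q : ℂ × (Fin N → ℂ) => Complex.exp (2 * Real.pi * Complex.I * (L * aFun g q).trace)) p :=
    (htr.const_mul _).cexp
  exact this

lemma diff_jAct {g : JTriple N} {p : ℂ × (Fin N → ℂ)} (hd : dnmC g.M p.1 ≠ 0) :
    DifferentiableAt ℝ (jAct g) p := by
  have h1 : DifferentiableAt ℝ (fun q : ℂ × (Fin N → ℂ) => mAct g.M q.1) p := by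
    have hm : DifferentiableAt ℂ (fun τ : ℂ => mAct g.M τ) p.1 := by
      have hnum : DifferentiableAt ℂ (fun τ : ℂ => ((g.M 0 0 : ℝ) : ℂ) * τ + ((g.M 0 1 : ℝ) : ℂ)) p.1 :=
        (differentiableAt_id.const_mul _).add_const _
      have hden : DifferentiableAt ℂ (fun τ : ℂ => ((g.M 1 0 : ℝ) : ℂ) * τ + ((g.M 1 1 : ℝ) : ℂ)) p.1 :=
        (differentiableAt_id.const_mul _).add_const _
      exact hnum.div hden hd
    exact (hm.restrictScalars ℝ).comp p differentiableAt_fst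
  have h2 : DifferentiableAt ℝ (fun q : ℂ × (Fin N → ℂ) =>
      betaC g.M q.1 • (q.2 + q.1 • col1 g.X + col2 g.X)) p := by
    rw [differentiableAt_pi]
    intro i
    show DifferentiableAt ℝ (fun q : ℂ × (Fin N → ℂ) =>
      betaC g.M q.1 * (q.2 i + q.1 * col1 g.X i + col2 g.X i)) p
    exact (diff_betaC hd).mul (diff_Wv g p i)
  exact h1.prodMk h2

lemma diff_jSlash {k : ℤ} {L : Matrix (Fin N) (Fin N) ℂ} {g : JTriple N}
    {f : ℂ × (Fin N → ℂ) → ℂ} (hf : ContDiff ℝ (⊤ : ℕ∞) f)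
    {p : ℂ × (Fin N → ℂ)} (hd : dnmC g.M p.1 ≠ 0) :
    DifferentiableAt ℝ (jSlash k L f g) p := by
  have hβk : DifferentiableAt ℝ (fun q : ℂ × (Fin N → ℂ) => betaC g.M q.1 ^ k) p := by
    have h1 : DifferentiableAt ℂ (fun τ : ℂ => betaC g.M τ ^ k) p.1 := by
      have hb : DifferentiableAt ℂ (fun τ : ℂ => ((g.M 1 0 : ℝ) : ℂ) * τ + ((g.M 1 1 : ℝ) : ℂ)) p.1 :=
        (differentiableAt_id.const_mul _).add_const _
      exact (hb.inv hd).zpow (Or.inl (inv_ne_zero hd))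
    exact (h1.restrictScalars ℝ).comp p differentiableAt_fst
  have hfa : DifferentiableAt ℝ (fun q => f (jAct g q)) p :=
    ((hf.differentiable (by simp)) (jAct g p)).comp p (diff_jAct hd)
  exact (hβk.mul (diff_alphaL hd)).mul hfa

/-- Directional derivative formula for the slash action in the `z_j`-directions. -/
lemma fderiv_jSlash_dir (k : ℤ) (L : Matrix (Fin N) (Fin N) ℂ) (g : JTriple N)
    (f : ℂ × (Fin N → ℂ) → ℂ) (hf : ContDiff ℝ (⊤ : ℕ∞) f)
    (p : ℂ × (Fin N → ℂ)) (hd : dnmC g.M p.1 ≠ 0) (j : Fin N) (t : ℂ) :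
    fderiv ℝ (jSlash k L f g) p (0, (Pi.single j t : Fin N → ℂ))
      = betaC g.M p.1 ^ k * alphaL L g p *
        ((2 * Real.pi * Complex.I) * (trL L (col1 g.X) (Pi.single j t)
            + trL L (Pi.single j t) (col1 g.X)
            - cB g p * (trL L (Wv g p) (Pi.single j t) + trL L (Pi.single j t) (Wv g p)))
            * f (jAct g p)
          + fderiv ℝ f (jAct g p) (0, (Pi.single j (betaC g.M p.1 * t) : Fin N → ℂ))) := by
  have hγ : HasDerivAt (fun s : ℝ => ((p.1, p.2 + s • (Pi.single j t : Fin N → ℂ)) : ℂ × (Fin N → ℂ)))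
      ((0 : ℂ), (Pi.single j t : Fin N → ℂ)) 0 := by
    have := ((hasDerivAt_const (0:ℝ) p.2).add ((hasDerivAt_id 0).smul_const (Pi.single j t : Fin N → ℂ)))
    simpa using (hasDerivAt_const (0:ℝ) p.1).prodMk this
  have h := (diff_jSlash hf hd (k := k) (L := L)).hasFDerivAt.comp_hasDerivAt_of_eq 0 hγ
    (by refine Prod.ext rfl ?_; simp)
  exact h.unique (hasDerivAt_jSlash_line k L g f hf p j t)


/-- `ℝ`-linear decomposition of the `z_j`-directional derivative. -/
lemma fderiv_single_decomp (f : ℂ × (Fin N → ℂ) → ℂ) (q : ℂ × (Fin N → ℂ)) (j : Fin N) (w : ℂ) :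
    fderiv ℝ f q (0, (Pi.single j w : Fin N → ℂ))
      = (w.re : ℂ) * fderiv ℝ f q (0, (Pi.single j 1 : Fin N → ℂ))
        + (w.im : ℂ) * fderiv ℝ f q (0, (Pi.single j Complex.I : Fin N → ℂ)) := by
  have hv : ((0 : ℂ), (Pi.single j w : Fin N → ℂ))
      = w.re • ((0 : ℂ), (Pi.single j 1 : Fin N → ℂ))
        + w.im • ((0 : ℂ), (Pi.single j Complex.I : Fin N → ℂ)) := by
    refine Prod.ext (by simp) ?_
    funext i
    rcases eq_or_ne i j with rfl | h
    · simp only [Prod.snd_add, Prod.smul_snd, Pi.add_apply, Pi.smul_apply,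
        Pi.single_eq_same, Complex.real_smul, mul_one]
      exact (Complex.re_add_im w).symm
    · simp [Pi.single_apply, h]
  rw [hv, map_add, (fderiv ℝ f q).map_smul, (fderiv ℝ f q).map_smul,
    Complex.real_smul, Complex.real_smul]

lemma im_mAct {M : Matrix (Fin 2) (Fin 2) ℝ} (hdet : M.det = 1) {τ : ℂ} (hτ : 0 < τ.im) :
    (mAct M τ).im = τ.im * Complex.normSq (betaC M τ) := by
  have hd : dnmC M τ ≠ 0 := dnmC_ne_zero hdet hτ
  have hns : Complex.normSq (dnmC M τ) ≠ 0 := by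
    simpa [Complex.normSq_eq_zero] using hd
  have hβ : Complex.normSq (betaC M τ) = (Complex.normSq (dnmC M τ))⁻¹ := by
    rw [show betaC M τ = (dnmC M τ)⁻¹ from rfl, Complex.normSq_inv]
  rw [show mAct M τ = (((M 0 0 : ℝ) : ℂ) * τ + ((M 0 1 : ℝ) : ℂ)) / dnmC M τ from rfl,
    Complex.div_im, hβ]
  rw [Matrix.det_fin_two] at hdet
  have h1 : (((M 0 0 : ℝ) : ℂ) * τ + ((M 0 1 : ℝ) : ℂ)).im = M 0 0 * τ.im := by simp
  have h2 : (((M 0 0 : ℝ) : ℂ) * τ + ((M 0 1 : ℝ) : ℂ)).re = M 0 0 * τ.re + M 0 1 := by simp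
  have h3 : (dnmC M τ).re = M 1 0 * τ.re + M 1 1 := by simp [dnmC]
  have h4 : (dnmC M τ).im = M 1 0 * τ.im := by simp [dnmC]
  rw [h1, h2, h3, h4]
  field_simp
  ring_nf
  nlinarith [hdet]

set_option maxHeartbeats 1000000 in
lemma scalar_key (c d x1 x2 : ℝ) (τ z : ℂ) (hτ : τ.im ≠ 0)
    (hd : (c : ℂ) * τ + (d : ℂ) ≠ 0) :
    (x1 : ℂ) - (c : ℂ) * ((c : ℂ) * τ + (d : ℂ))⁻¹ * (z + τ * (x1 : ℂ) + (x2 : ℂ))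
        + ((τ.im : ℝ) : ℂ)⁻¹ * (((z.im : ℝ) : ℂ))
      = ((c : ℂ) * τ + (d : ℂ))⁻¹
          * (((τ.im : ℝ) : ℂ) * ((Complex.normSq (((c : ℂ) * τ + (d : ℂ))⁻¹) : ℝ) : ℂ))⁻¹
          * (((((c : ℂ) * τ + (d : ℂ))⁻¹ * (z + τ * (x1 : ℂ) + (x2 : ℂ))).im : ℂ)) := by
  have hcdn : (starRingEnd ℂ) ((c : ℂ) * τ + (d : ℂ)) ≠ 0 := by
    rw [starRingEnd_apply, star_ne_zero]
    exact hd
  have h2I : (2 : ℂ) * Complex.I ≠ 0 := by simp [Complex.I_ne_zero]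
  have hsub : τ - (starRingEnd ℂ) τ ≠ 0 := by
    rw [Complex.sub_conj]
    simp [hτ, Complex.I_ne_zero]
  rw [imC z, imC (((c : ℂ) * τ + (d : ℂ))⁻¹ * (z + τ * (x1 : ℂ) + (x2 : ℂ))), ← Complex.mul_conj]
  rw [imC τ]
  simp only [_root_.map_mul, _root_.map_add, map_inv₀, Complex.conj_ofReal]
  rw [show (starRingEnd ℂ) τ = τ - (τ - (starRingEnd ℂ) τ) by ring] at *
  generalize hS : τ - (starRingEnd ℂ) τ = S at *
  rw [show (starRingEnd ℂ) z = z - (z - (starRingEnd ℂ) z) by ring]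
  generalize z - (starRingEnd ℂ) z = sz
  have hSp : S ≠ 0 := by simpa using hsub
  have hdn2 : (c : ℂ) * (τ - S) + (d : ℂ) ≠ 0 := by
    simpa only [_root_.map_mul, _root_.map_add, Complex.conj_ofReal,
      show (starRingEnd ℂ) τ = τ - S from by rw [← hS]; ring] using hcdn
  field_simp
  ring


lemma trL_single_right (L : Matrix (Fin N) (Fin N) ℂ) (a : Fin N → ℂ) (j : Fin N) (t : ℂ) :
    trL L a (Pi.single j t) = t * ∑ l, L j l * a l := by
  rw [trL, Finset.sum_eq_single j]
  · rw [Finset.mul_sum]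
    exact Finset.sum_congr rfl fun l _ => by simp [Pi.single_apply]; ring
  · intro i _ hij
    simp [Pi.single_apply, hij]
  · simp

lemma trL_single_left (L : Matrix (Fin N) (Fin N) ℂ) (b : Fin N → ℂ) (j : Fin N) (t : ℂ) :
    trL L (Pi.single j t) b = t * ∑ i, L i j * b i := by
  rw [trL, Finset.mul_sum]
  refine Finset.sum_congr rfl fun i _ => ?_
  rw [Finset.sum_eq_single j]
  · simp [Pi.single_apply]; ring
  · intro l _ hlj; simp [Pi.single_apply, hlj]
  · simp

end OpYAux
/-- The vector operators `Y₊` and `Y₋` are componentwise covariant of order 1: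
`Y₊,ⱼ(f|_{k,L}[g]) = (Y₊,ⱼ f)|_{k+1,L}[g]` and `Y₋,ⱼ(f|_{k,L}[g]) = (Y₋,ⱼ f)|_{k-1,L}[g]`. -/
theorem opY_covariant (N : ℕ) (hN : 1 ≤ N) (k : ℤ) (L : Matrix (Fin N) (Fin N) ℂ)
    (hL : L.IsSymm) (g : JTriple N) (hg : g.IsMem)
    (f : ℂ × (Fin N → ℂ) → ℂ) (hf : ContDiff ℝ (⊤ : ℕ∞) f)
    (p : ℂ × (Fin N → ℂ)) (hp : 0 < p.1.im) (j : Fin N) :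
    opYp L j (jSlash k L f g) p = jSlash (k + 1) L (opYp L j f) g p ∧
    opYm j (jSlash k L f g) p = jSlash (k - 1) L (opYm j f) g p := by
  classical
  obtain ⟨hdet, -⟩ := hg
  have hd : OpYAux.dnmC g.M p.1 ≠ 0 := OpYAux.dnmC_ne_zero hdet hp
  have hβne : betaC g.M p.1 ≠ 0 := inv_ne_zero hd
  have hsym : ∀ i l, L i l = L l i := by
    intro i l
    conv_lhs => rw [← hL]
    rfl
  -- directional derivative formula
  have hdir : ∀ t : ℂ, fderiv ℝ (jSlash k L f g) p (0, (Pi.single j t : Fin N → ℂ))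
      = betaC g.M p.1 ^ k * alphaL L g p
        * ((2 * Real.pi * Complex.I)
            * (t * (2 * ∑ l, L j l * (col1 g.X l - OpYAux.cB g p * OpYAux.Wv g p l)))
            * f (jAct g p)
          + fderiv ℝ f (jAct g p) (0, (Pi.single j (betaC g.M p.1 * t) : Fin N → ℂ))) := by
    intro t
    rw [OpYAux.fderiv_jSlash_dir k L g f hf p hd j t]
    rw [OpYAux.trL_single_right, OpYAux.trL_single_left, OpYAux.trL_single_right,
      OpYAux.trL_single_left]
    have e1 : ∑ i, L i j * col1 g.X i = ∑ l, L j l * col1 g.X l :=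
      Finset.sum_congr rfl fun i _ => by rw [hsym i j]
    have e2 : ∑ i, L i j * OpYAux.Wv g p i = ∑ l, L j l * OpYAux.Wv g p l :=
      Finset.sum_congr rfl fun i _ => by rw [hsym i j]
    have e3 : ∑ l, L j l * (col1 g.X l - OpYAux.cB g p * OpYAux.Wv g p l)
        = (∑ l, L j l * col1 g.X l) - OpYAux.cB g p * ∑ l, L j l * OpYAux.Wv g p l := by
      rw [Finset.mul_sum, ← Finset.sum_sub_distrib]
      exact Finset.sum_congr rfl fun l _ => by ring
    rw [e1, e2, e3]
    ring
  -- decomposition of z_j-derivatives of f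
  have hdec : ∀ w : ℂ, fderiv ℝ f (jAct g p) (0, (Pi.single j w : Fin N → ℂ))
      = (w.re : ℂ) * fderiv ℝ f (jAct g p) (0, (Pi.single j 1 : Fin N → ℂ))
        + (w.im : ℂ) * fderiv ℝ f (jAct g p) (0, (Pi.single j Complex.I : Fin N → ℂ)) :=
    fun w => OpYAux.fderiv_single_decomp f (jAct g p) j w
  have h1 := hdir 1
  rw [mul_one, hdec (betaC g.M p.1)] at h1
  have h2 := hdir Complex.I
  rw [hdec (betaC g.M p.1 * Complex.I), Complex.mul_I_re, Complex.mul_I_im,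
    Complex.ofReal_neg] at h2
  have hβrm : betaC g.M p.1
      = ((betaC g.M p.1).re : ℂ) + ((betaC g.M p.1).im : ℂ) * Complex.I :=
    (Complex.re_add_im _).symm
  -- dZ and dZBar of the slashed function
  have hdZF : dZ j (jSlash k L f g) p
      = betaC g.M p.1 ^ k * alphaL L g p
        * ((2 * Real.pi * Complex.I)
            * (2 * ∑ l, L j l * (col1 g.X l - OpYAux.cB g p * OpYAux.Wv g p l)) * f (jAct g p)
          + betaC g.M p.1 * ((2⁻¹ : ℂ)
              * (fderiv ℝ f (jAct g p) (0, (Pi.single j 1 : Fin N → ℂ))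
                - Complex.I * fderiv ℝ f (jAct g p) (0, (Pi.single j Complex.I : Fin N → ℂ))))) := by
    show (2⁻¹ : ℂ) * (fderiv ℝ (jSlash k L f g) p (0, Pi.single j 1)
        - Complex.I * fderiv ℝ (jSlash k L f g) p (0, Pi.single j Complex.I)) = _
    rw [h1, h2]
    linear_combination (-(2⁻¹ : ℂ) * betaC g.M p.1 ^ k * alphaL L g p
      * (fderiv ℝ f (jAct g p) (0, (Pi.single j 1 : Fin N → ℂ))
        - Complex.I * fderiv ℝ f (jAct g p) (0, (Pi.single j Complex.I : Fin N → ℂ)))) * hβrm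
      + (-(2⁻¹ : ℂ) * betaC g.M p.1 ^ k * alphaL L g p * ((2 * Real.pi * Complex.I) * (2 * (∑ l, L j l * (col1 g.X l - OpYAux.cB g p * OpYAux.Wv g p l)))) * f (jAct g p)
        + (2⁻¹ : ℂ) * betaC g.M p.1 ^ k * alphaL L g p * ((betaC g.M p.1).im : ℂ) * fderiv ℝ f (jAct g p) (0, (Pi.single j Complex.I : Fin N → ℂ))) * Complex.I_sq
  have hdZbF : dZBar j (jSlash k L f g) p
      = betaC g.M p.1 ^ k * alphaL L g p
        * ((((betaC g.M p.1).re : ℂ) - ((betaC g.M p.1).im : ℂ) * Complex.I)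
          * ((2⁻¹ : ℂ)
              * (fderiv ℝ f (jAct g p) (0, (Pi.single j 1 : Fin N → ℂ))
                + Complex.I * fderiv ℝ f (jAct g p) (0, (Pi.single j Complex.I : Fin N → ℂ))))) := by
    show (2⁻¹ : ℂ) * (fderiv ℝ (jSlash k L f g) p (0, Pi.single j 1)
        + Complex.I * fderiv ℝ (jSlash k L f g) p (0, Pi.single j Complex.I)) = _
    rw [h1, h2]
    linear_combination ((2⁻¹ : ℂ) * betaC g.M p.1 ^ k * alphaL L g p * ((2 * Real.pi * Complex.I) * (2 * (∑ l, L j l * (col1 g.X l - OpYAux.cB g p * OpYAux.Wv g p l)))) * f (jAct g p)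
      + (2⁻¹ : ℂ) * betaC g.M p.1 ^ k * alphaL L g p * ((betaC g.M p.1).im : ℂ) * fderiv ℝ f (jAct g p) (0, (Pi.single j Complex.I : Fin N → ℂ))) * Complex.I_sq
  -- the key pointwise identity
  have hkey : ∀ l, (col1 g.X l - OpYAux.cB g p * OpYAux.Wv g p l) + (yC p)⁻¹ * vC p l
      = betaC g.M p.1 * (yC (jAct g p))⁻¹ * vC (jAct g p) l := by
    intro l
    have h0 := OpYAux.scalar_key (g.M 1 0) (g.M 1 1) (g.X l 0) (g.X l 1) p.1 (p.2 l)
      (ne_of_gt hp) hd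
    have e4 : yC (jAct g p) = ((p.1.im * Complex.normSq (betaC g.M p.1) : ℝ) : ℂ) := by
      show ((mAct g.M p.1).im : ℂ) = _
      rw [OpYAux.im_mAct hdet hp]
    rw [e4, Complex.ofReal_mul]
    exact h0
  -- summed identity
  have hsums : Complex.I * ((2 * Real.pi * Complex.I)
        * (2 * ∑ l, L j l * (col1 g.X l - OpYAux.cB g p * OpYAux.Wv g p l)))
      + 2 * Complex.I * (yC p)⁻¹ * (∑ l, Lfrak L j l * vC p l)
      = betaC g.M p.1 * (2 * Complex.I * (yC (jAct g p))⁻¹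
          * (∑ l, Lfrak L j l * vC (jAct g p) l)) := by
    have lhs_eq : Complex.I * ((2 * Real.pi * Complex.I)
          * (2 * ∑ l, L j l * (col1 g.X l - OpYAux.cB g p * OpYAux.Wv g p l)))
        + 2 * Complex.I * (yC p)⁻¹ * (∑ l, Lfrak L j l * vC p l)
        = ∑ l, (2 * Complex.I) * Lfrak L j l
            * ((col1 g.X l - OpYAux.cB g p * OpYAux.Wv g p l) + (yC p)⁻¹ * vC p l) := by
      simp only [Lfrak, Matrix.smul_apply, smul_eq_mul, Finset.mul_sum,
        ← Finset.sum_add_distrib]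
      refine Finset.sum_congr rfl fun l _ => by ring
    have rhs_eq : betaC g.M p.1 * (2 * Complex.I * (yC (jAct g p))⁻¹
          * (∑ l, Lfrak L j l * vC (jAct g p) l))
        = ∑ l, (2 * Complex.I) * Lfrak L j l
            * (betaC g.M p.1 * (yC (jAct g p))⁻¹ * vC (jAct g p) l) := by
      simp only [Finset.mul_sum]
      exact Finset.sum_congr rfl fun l _ => by ring
    rw [lhs_eq, rhs_eq]
    exact Finset.sum_congr rfl fun l _ => by rw [hkey l]
  constructor
  · -- Y₊ covariance
    show Complex.I * dZ j (jSlash k L f g) p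
        + 2 * Complex.I * (yC p)⁻¹ * (∑ l, Lfrak L j l * vC p l) * jSlash k L f g p
      = betaC g.M p.1 ^ (k + 1) * alphaL L g p
        * (Complex.I * dZ j f (jAct g p)
          + 2 * Complex.I * (yC (jAct g p))⁻¹ * (∑ l, Lfrak L j l * vC (jAct g p) l)
            * f (jAct g p))
    have hFp : jSlash k L f g p = betaC g.M p.1 ^ k * alphaL L g p * f (jAct g p) := rfl
    have hzf : dZ j f (jAct g p) = (2⁻¹ : ℂ)
        * (fderiv ℝ f (jAct g p) (0, (Pi.single j 1 : Fin N → ℂ))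
          - Complex.I * fderiv ℝ f (jAct g p) (0, (Pi.single j Complex.I : Fin N → ℂ))) := rfl
    rw [hdZF, hFp, hzf, zpow_add_one₀ hβne]
    linear_combination (betaC g.M p.1 ^ k * alphaL L g p * f (jAct g p)) * hsums
  · -- Y₋ covariance
    show -Complex.I * yC p * dZBar j (jSlash k L f g) p
      = betaC g.M p.1 ^ (k - 1) * alphaL L g p
        * (-Complex.I * yC (jAct g p) * dZBar j f (jAct g p))
    have hzbf : dZBar j f (jAct g p) = (2⁻¹ : ℂ)
        * (fderiv ℝ f (jAct g p) (0, (Pi.single j 1 : Fin N → ℂ))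
          + Complex.I * fderiv ℝ f (jAct g p) (0, (Pi.single j Complex.I : Fin N → ℂ))) := rfl
    have hyq2 : yC (jAct g p) = yC p
        * (((betaC g.M p.1).re : ℂ) * ((betaC g.M p.1).re : ℂ)
          + ((betaC g.M p.1).im : ℂ) * ((betaC g.M p.1).im : ℂ)) := by
      show ((mAct g.M p.1).im : ℂ) = _
      rw [OpYAux.im_mAct hdet hp, Complex.normSq_apply]
      rw [show yC p = ((p.1.im : ℝ) : ℂ) from rfl]
      push_cast
      ring
    have hkk : betaC g.M p.1 ^ k = betaC g.M p.1 ^ (k - 1) * betaC g.M p.1 := by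
      rw [← zpow_add_one₀ hβne]
      norm_num
    rw [hdZbF, hzbf, hyq2, hkk]
    linear_combination (-Complex.I * yC p * betaC g.M p.1 ^ (k - 1) * alphaL L g p
      * ((2⁻¹ : ℂ) * (fderiv ℝ f (jAct g p) (0, (Pi.single j 1 : Fin N → ℂ))
          + Complex.I * fderiv ℝ f (jAct g p) (0, (Pi.single j Complex.I : Fin N → ℂ))))
      * (((betaC g.M p.1).re : ℂ) - ((betaC g.M p.1).im : ℂ) * Complex.I)) * hβrm
      + (Complex.I * yC p * betaC g.M p.1 ^ (k - 1) * alphaL L g p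
        * ((2⁻¹ : ℂ) * (fderiv ℝ f (jAct g p) (0, (Pi.single j 1 : Fin N → ℂ)) + Complex.I * fderiv ℝ f (jAct g p) (0, (Pi.single j Complex.I : Fin N → ℂ)))) * ((betaC g.M p.1).im : ℂ) * ((betaC g.M p.1).im : ℂ)) * Complex.I_sq
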